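/- One-velocity recovery: let m^l, m^g > 0 be staggered masses and u^{l,***}, u^{g,***} real. If the two-velocity projection update is u^{π,(n+1)} = u^{π,***} − δt·(G + ζD + Ξ^π ξ)/(m^l + m^g) with Ξˡ = −m^g, Ξᵍ = m^l, and the jump is fully removed by choosing ξ = (u^{g,***} − u^{l,***})/δt, then both updated velocities coincide and equal (m^l u^{l,***} + m^g u^{g,***})/(m^l + m^g) − δt(G + ζD)/(m^l + m^g), i.e., the one-velocity formulation with the mass-weighted average velocity. -/

import Mathlib

/-- One-velocity recovery: removing the jump (ξ = ⟦u⟧/δt) in the two-velocity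
projection yields identical updated velocities equal to the mass-weighted
one-velocity update. -/
theorem one_velocity_recovery
    (ml mg ul ug G D ζ δt : ℝ)
    (hml : 0 < ml) (hmg : 0 < mg) (hδt : 0 < δt) :
    let ξ := (ug - ul) / δt
    (ul - δt * (G + ζ * D + (-mg) * ξ) / (ml + mg)
        = (ml * ul + mg * ug) / (ml + mg) - δt * (G + ζ * D) / (ml + mg)) ∧
    (ug - δt * (G + ζ * D + ml * ξ) / (ml + mg)
        = (ml * ul + mg * ug) / (ml + mg) - δt * (G + ζ * D) / (ml + mg)) := by
  intro ξ
  have hs : ml + mg ≠ 0 := by positivity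
  have hδt' : δt ≠ 0 := ne_of_gt hδt
  constructor <;>
  · show _ = _
    simp only [ξ]
    field_simp
    ring
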